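/- Let A be a finite nonempty subset of the real line ℝ with its induced metric, with elements listed in increasing order a_1 < a_2 < ⋯ < a_n. Then for every t > 0, |tA|_Rips = n − Σ_{j=1}^{n−1} e^{−(a_{j+1} − a_j)·t}. -/

import Mathlib

open scoped BigOperators
open Finset

/-- The Rips magnitude function of a finite subset `A` of a metric space:
`|tA|_Rips = Σ_{∅ ≠ B ⊆ A} (−1)^{#B−1} e^{−diam(B)·t}`. -/
noncomputable def ripsMag {Y : Type*} [MetricSpace Y] (A : Finset Y) (t : ℝ) : ℝ :=
  ∑ B ∈ A.powerset.filter (fun B => B.Nonempty),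
    (-1 : ℝ) ^ (B.card - 1) * Real.exp (-(Metric.diam (B : Set Y)) * t)

lemma diam_finset_real (B : Finset ℝ) (hB : B.Nonempty) :
    Metric.diam (B : Set ℝ) = B.max' hB - B.min' hB := by
  apply le_antisymm
  · apply Metric.diam_le_of_forall_dist_le
    · simp [sub_nonneg, Finset.min'_le B _ (B.max'_mem hB)]
    · intro x hx y hy
      simp only [Finset.mem_coe] at hx hy
      rw [Real.dist_eq, abs_le]
      constructor
      · have h1 := B.min'_le x hx
        have h2 := B.le_max' y hy
        linarith
      · have h1 := B.min'_le y hy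
        have h2 := B.le_max' x hx
        linarith
  · have h := Metric.dist_le_diam_of_mem (Set.Finite.isBounded (B.finite_toSet))
      (by exact_mod_cast B.max'_mem hB) (by exact_mod_cast B.min'_mem hB)
    rw [Real.dist_eq] at h
    calc B.max' hB - B.min' hB ≤ |B.max' hB - B.min' hB| := le_abs_self _
    _ ≤ _ := h

lemma auxA (f : ℝ → ℝ) (x : ℝ) (S : Finset ℝ) :
    S.Nonempty → (∀ y ∈ S, y < x) →
    ∑ C ∈ S.powerset, (-1:ℝ)^C.card * f (sInf (insert x (C : Set ℝ)))
      = f x - f (sSup (S : Set ℝ)) := by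
  induction S using Finset.strongInduction with
  | _ S IH =>
  intro hS hx
  obtain ⟨y, hyS, hymin⟩ : ∃ y ∈ S, ∀ z ∈ S, y ≤ z :=
    ⟨S.min' hS, S.min'_mem hS, fun z hz => S.min'_le z hz⟩
  rcases (S.erase y).eq_empty_or_nonempty with h' | h'
  · have hSy : S = {y} := by
      apply Finset.eq_singleton_iff_unique_mem.2
      refine ⟨hyS, fun z hz => ?_⟩
      by_contra hne
      exact (Finset.ne_empty_of_mem (Finset.mem_erase.2 ⟨hne, hz⟩)) h'
    have hyx : y < x := hx y hyS
    rw [hSy]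
    have hp : ({y} : Finset ℝ).powerset = {∅, {y}} := by
      ext B; simp [Finset.subset_singleton_iff]
    rw [hp, Finset.sum_insert (by simp only [Finset.mem_singleton]; exact fun h => (Finset.singleton_ne_empty y) h.symm), Finset.sum_singleton]
    simp only [Finset.coe_empty, insert_empty_eq, csInf_singleton,
      Finset.coe_singleton, Finset.card_singleton, Finset.card_empty, pow_zero, pow_one]
    rw [csInf_pair, csSup_singleton, min_eq_right hyx.le]
    ring
  · have hSeq : S = insert y (S.erase y) := (Finset.insert_erase hyS).symm
    have hynot : y ∉ S.erase y := Finset.notMem_erase _ _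
    have hsub : S.erase y ⊂ S := Finset.erase_ssubset hyS
    rw [hSeq, Finset.sum_powerset_insert hynot]
    have h2 : ∀ C ∈ (S.erase y).powerset,
        (-1:ℝ)^(insert y C).card * f (sInf (insert x ((insert y C : Finset ℝ) : Set ℝ)))
          = -((-1:ℝ)^C.card) * f y := by
      intro C hC
      rw [Finset.mem_powerset] at hC
      have hyC : y ∉ C := fun h => hynot (hC h)
      rw [Finset.card_insert_of_notMem hyC]
      have hmin : sInf (insert x ((insert y C : Finset ℝ) : Set ℝ)) = y := by
        rw [← Finset.coe_insert]
        rw [(Finset.insert_nonempty x _).csInf_eq_min']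
        apply le_antisymm
        · exact Finset.min'_le _ _ (by simp)
        · apply Finset.le_min'
          intro z hz
          simp only [Finset.mem_insert] at hz
          rcases hz with rfl | rfl | hz
          · exact (hx y hyS).le
          · exact le_rfl
          · exact hymin z (Finset.erase_subset _ _ (hC hz))
      rw [hmin]
      ring
    rw [Finset.sum_congr rfl h2]
    have h3 : ∑ C ∈ (S.erase y).powerset, -((-1:ℝ)^C.card) * f y = 0 := by
      have hz := Finset.sum_powerset_neg_one_pow_card_of_nonempty h'
      have hzr : ∑ C ∈ (S.erase y).powerset, (-1:ℝ)^C.card = 0 := by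
        exact_mod_cast congrArg (fun z : ℤ => (z : ℝ)) hz
      calc ∑ C ∈ (S.erase y).powerset, -((-1:ℝ)^C.card) * f y
          = -(∑ C ∈ (S.erase y).powerset, (-1:ℝ)^C.card) * f y := by
            rw [← Finset.sum_neg_distrib, Finset.sum_mul]
        _ = 0 := by rw [hzr]; ring
    rw [h3, add_zero]
    rw [IH _ hsub h' (fun z hz => hx z (Finset.erase_subset _ _ hz))]
    have hsup : sSup ((insert y (S.erase y) : Finset ℝ) : Set ℝ) = sSup ((S.erase y : Finset ℝ) : Set ℝ) := by
      rw [Finset.coe_insert]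
      rw [csSup_insert (Set.Finite.bddAbove (Finset.finite_toSet _)) (by exact_mod_cast h')]
      apply sup_eq_right.2
      obtain ⟨w, hw⟩ := h'
      have hw2 : w ≤ sSup ((S.erase y : Finset ℝ) : Set ℝ) := by
        apply le_csSup (Set.Finite.bddAbove (Finset.finite_toSet _))
        exact_mod_cast hw
      exact le_trans (hymin w (Finset.erase_subset _ _ hw)) hw2
    rw [hsup]

lemma ripsMag_eq_real (A : Finset ℝ) (t : ℝ) :
    ripsMag A t =
      (∑ B ∈ A.powerset, (-1:ℝ)^(B.card-1) * Real.exp (-(Metric.diam (B : Set ℝ)) * t)) - 1 := by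
  classical
  rw [ripsMag, ← Finset.sum_filter_add_sum_filter_not A.powerset (fun B => B.Nonempty)]
  have h : A.powerset.filter (fun B => ¬ B.Nonempty) = {∅} := by
    ext B
    simp only [Finset.mem_filter, Finset.mem_powerset, Finset.not_nonempty_iff_eq_empty,
      Finset.mem_singleton]
    exact ⟨fun h => h.2, fun h => ⟨h ▸ Finset.empty_subset A, h⟩⟩
  rw [h, Finset.sum_singleton]
  simp

lemma mono_aux {n : ℕ} {a : ℕ → ℝ} (ha : ∀ j, j + 1 < n → a j < a (j + 1)) :
    ∀ k j, j < k → k < n → a j < a k := by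
  intro k
  induction k with
  | zero => intro j h; omega
  | succ m IHm =>
    intro j hj hm
    rcases Nat.lt_succ_iff_lt_or_eq.mp hj with h | h
    · exact lt_trans (IHm j h (by omega)) (ha m hm)
    · subst h; exact ha j hm

/-- for a finite nonempty subset `{a 0 < a 1 < ⋯ < a (n−1)}` of ℝ,
`|tA|_Rips = n − Σ_{j=1}^{n−1} e^{−(a_{j+1} − a_j) t}`. -/
theorem ripsMag_finset_real
    (n : ℕ) (hn : 1 ≤ n) (a : ℕ → ℝ)
    (ha : ∀ j, j + 1 < n → a j < a (j + 1))
    (t : ℝ) (ht : 0 < t) :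
    ripsMag ((Finset.range n).image a) t =
      (n : ℝ) - ∑ j ∈ Finset.range (n - 1), Real.exp (-(a (j + 1) - a j) * t) := by
  induction n, hn using Nat.le_induction with
  | base =>
    have h1 : (Finset.range 1).image a = {a 0} := by
      rw [Finset.range_one, Finset.image_singleton]
    rw [h1, ripsMag_eq_real]
    have hp : ({a 0} : Finset ℝ).powerset = {∅, {a 0}} := by
      ext B; simp [Finset.subset_singleton_iff]
    have hne : (∅ : Finset ℝ) ∉ ({{a 0}} : Finset (Finset ℝ)) := by
      simp only [Finset.mem_singleton]
      exact fun h => (Finset.singleton_ne_empty (a 0)) h.symm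
    rw [hp, Finset.sum_insert hne, Finset.sum_singleton]
    simp
  | succ n hn IH =>
    obtain ⟨m, rfl⟩ : ∃ m, n = m + 1 := ⟨n - 1, (Nat.succ_pred_eq_of_pos hn).symm⟩
    set n := m + 1 with hmn
    have hmono : ∀ k j, j < k → k < n + 1 → a j < a k := mono_aux ha
    set x := a n with hxdef
    set A := (Finset.range n).image a with hAdef
    have hx : ∀ y ∈ A, y < x := by
      intro y hy
      obtain ⟨j, hj, rfl⟩ := Finset.mem_image.1 hy
      exact hmono n j (Finset.mem_range.1 hj) (by omega)
    have hA : A.Nonempty := ⟨a 0, Finset.mem_image_of_mem a (Finset.mem_range.2 (by omega))⟩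
    have hxA : x ∉ A := fun h => lt_irrefl x (hx x h)
    have himg : (Finset.range (n + 1)).image a = insert x A := by
      rw [Finset.range_add_one, Finset.image_insert]
    rw [himg, ripsMag_eq_real, Finset.sum_powerset_insert hxA]
    have hterm : ∀ C ∈ A.powerset,
        (-1:ℝ) ^ ((insert x C).card - 1) *
          Real.exp (-(Metric.diam ((insert x C : Finset ℝ) : Set ℝ)) * t)
          = (-1:ℝ) ^ C.card *
              (fun mm => Real.exp (-(x - mm) * t)) (sInf (insert x (C : Set ℝ))) := by
      intro C hC
      have hxC : x ∉ C := fun h => hxA (Finset.mem_powerset.1 hC h)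
      rw [Finset.card_insert_of_notMem hxC]
      simp only [Nat.add_sub_cancel]
      have hdiam : Metric.diam ((insert x C : Finset ℝ) : Set ℝ)
          = x - sInf (insert x (C : Set ℝ)) := by
        rw [diam_finset_real _ (Finset.insert_nonempty x C)]
        have hmax : (insert x C).max' (Finset.insert_nonempty x C) = x := by
          apply le_antisymm
          · apply Finset.max'_le
            intro z hz
            rcases Finset.mem_insert.1 hz with rfl | hz
            · exact le_rfl
            · exact (hx z (Finset.mem_powerset.1 hC hz)).le
          · exact Finset.le_max' _ _ (Finset.mem_insert_self x C)
        have hmin : sInf (insert x (C : Set ℝ)) = (insert x C).min' (Finset.insert_nonempty x C) := by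
          rw [← Finset.coe_insert]
          exact (Finset.insert_nonempty x C).csInf_eq_min'
        rw [hmax, hmin]
      rw [hdiam]
    rw [Finset.sum_congr rfl hterm,
      auxA (fun mm => Real.exp (-(x - mm) * t)) x A hA hx]
    have hsup : sSup (A : Set ℝ) = a m := by
      rw [hA.csSup_eq_max']
      apply le_antisymm
      · apply Finset.max'_le
        intro z hz
        obtain ⟨j, hj, rfl⟩ := Finset.mem_image.1 hz
        rw [Finset.mem_range] at hj
        rcases Nat.lt_succ_iff_lt_or_eq.mp hj with h | h
        · exact (hmono m j h (by omega)).le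
        · subst h; exact le_rfl
      · exact Finset.le_max' _ _ (Finset.mem_image_of_mem a (Finset.mem_range.2 (by omega)))
    rw [hsup]
    have hIH := IH (fun j hj => ha j (by omega))
    rw [ripsMag_eq_real] at hIH
    simp only [hmn] at hIH ⊢
    rw [Nat.add_sub_cancel] at hIH ⊢
    rw [Finset.sum_range_succ]
    push_cast
    simp only [sub_self, neg_zero, zero_mul, Real.exp_zero]
    have hxe : x = a (m + 1) := by rw [hxdef, hmn]
    rw [hxe]
    push_cast at hIH
    linarith [hIH]
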